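/- arXiv:1907.07740 — 4 statements merged into one kernel-verified Lean document; each statement's English description precedes it below -/
import Mathlib

section
/- Let (g, τ) be an irreducible symmetric Lie algebra (g^{−τ} ≠ 0 and no nontrivial τ-invariant ideals) with g not semisimple. Then dim g = 1 and τ = −id. -/
/-- An irreducible symmetric Lie algebra `(g,τ)` (i.e. `g^{-τ} ≠ 0` and
the only `τ`-invariant ideals are `0` and `g`) with `g` not semisimple (nonzero
solvable radical) satisfies `dim g = 1` and `τ = -id`. -/
theorem stmt_9 {L : Type*} [LieRing L] [LieAlgebra ℝ L] [FiniteDimensional ℝ L]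
    (τ : L →ₗ⁅ℝ⁆ L) (hτ : ∀ z : L, τ (τ z) = z)
    (hirr₁ : ∃ x : L, τ x = -x ∧ x ≠ 0)
    (hirr₂ : ∀ I : LieIdeal ℝ L, (∀ x ∈ I, τ x ∈ I) → I = ⊥ ∨ I = ⊤)
    (hss : LieAlgebra.radical ℝ L ≠ ⊥) :
    Module.finrank ℝ L = 1 ∧ ∀ x : L, τ x = -x := by
  obtain ⟨x, hx, hx0⟩ := hirr₁
  have hτinj : Function.Injective τ := Function.LeftInverse.injective hτ
  have hRsolv : LieAlgebra.IsSolvable (LieAlgebra.radical ℝ L) := inferInstance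
  -- the radical is τ-invariant
  have hJsolv : LieAlgebra.IsSolvable (LieIdeal.comap τ (LieAlgebra.radical ℝ L)) := by
    let f : (LieIdeal.comap τ (LieAlgebra.radical ℝ L)) →ₗ⁅ℝ⁆ (LieAlgebra.radical ℝ L) :=
      { toFun := fun a => ⟨τ a.1, a.2⟩
        map_add' := fun a b => by ext; simp
        map_smul' := fun c a => by ext; simp
        map_lie' := by intro a b; ext; simp }
    have hf : Function.Injective f := by
      intro a b hab
      exact Subtype.ext (hτinj (congrArg Subtype.val hab))
    exact hf.lieAlgebra_isSolvable
  have h1 : LieIdeal.comap τ (LieAlgebra.radical ℝ L) ≤ LieAlgebra.radical ℝ L :=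
    (LieAlgebra.LieIdeal.solvable_iff_le_radical ℝ L _).mp hJsolv
  have hRinv : ∀ y ∈ LieAlgebra.radical ℝ L, τ y ∈ LieAlgebra.radical ℝ L := by
    intro y hy
    have hy' : y ∈ LieIdeal.comap τ (LieIdeal.comap τ (LieAlgebra.radical ℝ L)) := by
      rw [LieIdeal.mem_comap, LieIdeal.mem_comap, hτ]; exact hy
    exact (LieIdeal.mem_comap).mp (LieIdeal.comap_mono h1 hy')
  have hRtop : LieAlgebra.radical ℝ L = ⊤ := by
    rcases hirr₂ _ hRinv with h | h
    · exact absurd h hss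
    · exact h
  -- L is solvable
  have hLsolv : LieAlgebra.IsSolvable L := by
    rw [hRtop] at hRsolv
    have hsurj : Function.Surjective (⊤ : LieIdeal ℝ L).incl := by
      intro y; exact ⟨⟨y, trivial⟩, rfl⟩
    exact hsurj.lieAlgebra_isSolvable
  have : Nontrivial L := nontrivial_of_ne x 0 hx0
  -- the derived ideal is τ-invariant and proper, hence ⊥, so L is abelian
  have hDinv : ∀ y ∈ LieAlgebra.derivedSeries ℝ L 1, τ y ∈ LieAlgebra.derivedSeries ℝ L 1 := by
    intro y hy
    exact LieIdeal.derivedSeries_map_le 1 (LieIdeal.mem_map hy)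
  have hDbot : LieAlgebra.derivedSeries ℝ L 1 = ⊥ := by
    rcases hirr₂ _ hDinv with h | h
    · exact h
    · exact absurd h (LieAlgebra.derivedSeries_lt_top_of_solvable ℝ L).ne
  have habel : ∀ a b : L, ⁅a, b⁆ = 0 := by
    intro a b
    have : ⁅a, b⁆ ∈ LieAlgebra.derivedSeries ℝ L 1 := by
      simp only [LieAlgebra.derivedSeries_def, LieAlgebra.derivedSeriesOfIdeal_succ,
        LieAlgebra.derivedSeriesOfIdeal_zero]
      exact LieSubmodule.lie_mem_lie trivial trivial
    rwa [hDbot, LieSubmodule.mem_bot] at this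
  -- the +1 eigenspace is a τ-invariant ideal, and is not ⊤, hence ⊥
  let E : LieIdeal ℝ L :=
    { carrier := {y | τ y = y}
      add_mem' := by intro a b ha hb; simp only [Set.mem_setOf_eq] at *; rw [map_add τ, ha, hb]
      zero_mem' := by simp
      smul_mem' := by intro c a ha; simp only [Set.mem_setOf_eq] at *; rw [map_smul τ, ha]
      lie_mem := by intro a b hb; simp only [Set.mem_setOf_eq] at *; rw [habel]; simp }
  have hEbot : E = ⊥ := by
    rcases hirr₂ E (fun y hy => by
      have hy' : τ y = y := hy
      show τ (τ y) = τ y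
      exact (hτ y).trans hy'.symm) with h | h
    · exact h
    · exfalso
      have hxE : x ∈ E := h ▸ trivial
      have hxx : τ x = x := hxE
      rw [hx] at hxx
      have h2 : (2 : ℝ) • x = 0 := by
        rw [two_smul]
        nth_rewrite 1 [← hxx]
        exact neg_add_cancel x
      rcases smul_eq_zero.mp h2 with h' | h'
      · norm_num at h'
      · exact hx0 h'
  have hneg : ∀ y : L, τ y = -y := by
    intro y
    have hyE : y + τ y ∈ E := by
      show τ (y + τ y) = y + τ y
      rw [map_add τ, hτ, add_comm]
    rw [hEbot, LieSubmodule.mem_bot] at hyE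
    exact eq_neg_of_add_eq_zero_left (by rw [add_comm]; exact hyE)
  refine ⟨?_, hneg⟩
  -- span of x is a τ-invariant ideal, nonzero, hence ⊤
  let S : LieIdeal ℝ L :=
    { Submodule.span ℝ {x} with
      lie_mem := by intro a b hb; rw [habel]; exact Submodule.zero_mem _ }
  have hSinv : ∀ y ∈ S, τ y ∈ S := by
    intro y hy
    obtain ⟨c, rfl⟩ := Submodule.mem_span_singleton.mp hy
    rw [map_smul τ, hx, smul_neg, ← neg_smul]
    exact Submodule.smul_mem _ _ (Submodule.mem_span_singleton_self x)
  have hStop : S = ⊤ := by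
    rcases hirr₂ S hSinv with h | h
    · exfalso
      have : x ∈ S := Submodule.mem_span_singleton_self x
      rw [h, LieSubmodule.mem_bot] at this
      exact hx0 this
    · exact h
  exact finrank_eq_one x hx0 (fun w => Submodule.mem_span_singleton.mp
    (by rw [show Submodule.span ℝ {x} = (S : Submodule ℝ L) from rfl]; rw [hStop]; trivial))
end

section
/- Let g₁ be a simple real Lie algebra and g = g₁ ⊕ g₁ with the flip involution τ(x,y) = (y,x). If σ is an involutive automorphism of g commuting with τ, then there exists an involutive automorphism σ₁ of g₁ such that either σ(x,y) = (σ₁(x), σ₁(y)) for all x,y, or σ(x,y) = (σ₁(y), σ₁(x)) for all x,y. -/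
/-- For a simple real Lie algebra `g₁` and `g = g₁ ⊕ g₁` with the flip
involution `τ(x,y) = (y,x)`, every involutive automorphism `σ` of `g` (an ℝ-linear
bijection preserving the componentwise bracket) commuting with `τ` is of the form
`σ(x,y) = (σ₁ x, σ₁ y)` or `σ(x,y) = (σ₁ y, σ₁ x)` for an involutive automorphism
`σ₁` of `g₁`. -/
theorem stmt_11 {L : Type*} [LieRing L] [LieAlgebra ℝ L] [LieAlgebra.IsSimple ℝ L]
    (σ : (L × L) ≃ₗ[ℝ] (L × L))
    (hbracket : ∀ p q : L × L,
      σ (⁅p.1, q.1⁆, ⁅p.2, q.2⁆) = (⁅(σ p).1, (σ q).1⁆, ⁅(σ p).2, (σ q).2⁆))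
    (hinv : ∀ p : L × L, σ (σ p) = p)
    (hcomm : ∀ p : L × L, σ (p.2, p.1) = ((σ p).2, (σ p).1)) :
    ∃ σ₁ : L →ₗ⁅ℝ⁆ L, (∀ x : L, σ₁ (σ₁ x) = x) ∧
      ((∀ x y : L, σ (x, y) = (σ₁ x, σ₁ y)) ∨ (∀ x y : L, σ (x, y) = (σ₁ y, σ₁ x))) := by
  set a : L →ₗ[ℝ] L := (LinearMap.fst ℝ L L) ∘ₗ (σ.toLinearMap ∘ₗ LinearMap.inl ℝ L L) with ha
  set c : L →ₗ[ℝ] L := (LinearMap.snd ℝ L L) ∘ₗ (σ.toLinearMap ∘ₗ LinearMap.inl ℝ L L) with hc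
  have hx0 : ∀ x : L, σ (x, 0) = (a x, c x) := fun x => rfl
  have h0x : ∀ x : L, σ (0, x) = (c x, a x) := by
    intro x
    have := hcomm (x, 0)
    simpa [hx0 x] using this
  have hσ : ∀ x y : L, σ (x, y) = (a x + c y, c x + a y) := by
    intro x y
    have h : (x, y) = ((x, 0) : L × L) + (0, y) := by simp
    rw [h, map_add, hx0, h0x, Prod.mk_add_mk]
  have ha_br : ∀ x y : L, a ⁅x, y⁆ = ⁅a x, a y⁆ := by
    intro x y
    have h := hbracket (x, 0) (y, 0)
    simp only [hx0] at h
    have := congrArg Prod.fst h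
    simpa [hx0] using this
  have hc_br : ∀ x y : L, c ⁅x, y⁆ = ⁅c x, c y⁆ := by
    intro x y
    have h := hbracket (x, 0) (y, 0)
    simp only [hx0] at h
    have := congrArg Prod.snd h
    simpa [hx0] using this
  have hcross : ∀ x y : L, ⁅a x, c y⁆ = 0 := by
    intro x y
    have h := hbracket (x, 0) (0, y)
    simp only [hx0, h0x] at h
    have h' := congrArg Prod.fst h
    simpa [Prod.mk_zero_zero] using h'.symm
  have hinv1 : ∀ x : L, a (a x) + c (c x) = x := by
    intro x
    have h := hinv (x, 0)
    rw [hx0, hσ] at h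
    exact congrArg Prod.fst h
  have hinv2 : ∀ x : L, a (c x) = -c (a x) := by
    intro x
    have h := hinv (x, 0)
    rw [hx0, hσ] at h
    have h2 : c (a x) + a (c x) = 0 := congrArg Prod.snd h
    rw [add_comm] at h2
    exact eq_neg_of_add_eq_zero_left h2
  have hacac : ∀ x y : L, ⁅a (c x), a (c y)⁆ = 0 := by
    intro x y
    rw [hinv2 y, lie_neg, hcross, neg_zero]
  -- The composite a ∘ c is a Lie algebra morphism
  set E : L →ₗ⁅ℝ⁆ L :=
    { toLinearMap := a ∘ₗ c
      map_lie' := by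
        intro x y
        show a (c ⁅x, y⁆) = ⁅a (c x), a (c y)⁆
        rw [hc_br, ha_br] } with hE
  have hEbr : ∀ x y : L, E ⁅x, y⁆ = 0 := by
    intro x y
    show a (c ⁅x, y⁆) = 0
    rw [hc_br, ha_br]
    exact hacac x y
  have hac0 : ∀ x : L, a (c x) = 0 := by
    rcases LieAlgebra.IsSimple.eq_bot_or_eq_top E.ker with hk | hk
    · exfalso
      have hinj : Function.Injective E := (LieHom.ker_eq_bot E).mp hk
      have : IsLieAbelian L := by
        constructor
        intro x y
        apply hinj
        rw [hEbr, map_zero]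
      exact LieAlgebra.IsSimple.non_abelian (R := ℝ) (L := L) this
    · intro x
      have : x ∈ E.ker := hk ▸ LieSubmodule.mem_top x
      exact LieHom.mem_ker.mp this
  set A : L →ₗ⁅ℝ⁆ L := { toLinearMap := a, map_lie' := fun {x y} => ha_br x y } with hA
  rcases LieAlgebra.IsSimple.eq_bot_or_eq_top A.ker with hk | hk
  · -- a injective, hence c = 0 and σ = (a, a)
    have hinj : Function.Injective A := (LieHom.ker_eq_bot A).mp hk
    have hc0 : ∀ x : L, c x = 0 := by
      intro x
      apply hinj
      show a (c x) = a 0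
      rw [hac0, map_zero]
    refine ⟨A, ?_, Or.inl ?_⟩
    · intro x
      have := hinv1 x
      rw [hc0, add_zero] at this
      show a (a x) = x
      exact this
    · intro x y
      rw [hσ, hc0, hc0, add_zero, zero_add]
      rfl
  · -- a = 0, σ = flip ∘ (c, c)
    have ha0 : ∀ x : L, a x = 0 := by
      intro x
      have : x ∈ A.ker := hk ▸ LieSubmodule.mem_top x
      exact LieHom.mem_ker.mp this
    set C : L →ₗ⁅ℝ⁆ L := { toLinearMap := c, map_lie' := fun {x y} => hc_br x y } with hC
    refine ⟨C, ?_, Or.inr ?_⟩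
    · intro x
      have := hinv1 x
      rw [ha0, zero_add] at this
      show c (c x) = x
      exact this
    · intro x y
      rw [hσ, ha0, ha0, add_zero, zero_add]
      rfl
end

section
/- Let g₁ be a simple real Lie algebra and σ₁ an involutive automorphism of g₁ whose fixed-point algebra g₁^{σ₁} = ℝ·y₀ is one-dimensional. Then g₁ is three-dimensional, i.e., g₁ is isomorphic to sl₂(ℝ) or su₂(ℂ). -/
/-- A simple real Lie algebra `g₁` admitting an involutive automorphism
`σ₁` with one-dimensional fixed-point algebra `g₁^{σ₁} = ℝ·y₀` is three-dimensional
(hence isomorphic to `sl₂(ℝ)` or `su₂(ℂ)`). -/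
theorem stmt_15 {L : Type*} [LieRing L] [LieAlgebra ℝ L] [LieAlgebra.IsSimple ℝ L]
    [FiniteDimensional ℝ L]
    (σ₁ : L →ₗ⁅ℝ⁆ L) (hσ₁ : ∀ z : L, σ₁ (σ₁ z) = z)
    (y₀ : L) (hy₀ : y₀ ≠ 0)
    (hfix : {x : L | σ₁ x = x} = (Submodule.span ℝ {y₀} : Submodule ℝ L)) :
    Module.finrank ℝ L = 3 := by
  classical
  -- the -1 eigenspace
  set P : Submodule ℝ L := LinearMap.ker ((σ₁ : L →ₗ[ℝ] L) + LinearMap.id) with hP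
  have hPmem : ∀ x : L, x ∈ P ↔ σ₁ x = -x := by
    intro x
    simp [hP, LinearMap.mem_ker, add_eq_zero_iff_eq_neg]
  -- σ fixes y₀
  have hσy₀ : σ₁ y₀ = y₀ := by
    have h1 : y₀ ∈ {x : L | σ₁ x = x} := by
      rw [hfix]
      simpa using Submodule.mem_span_singleton_self y₀
    exact h1
  -- fixed vectors are multiples of y₀
  have hfix' : ∀ x : L, σ₁ x = x → ∃ a : ℝ, x = a • y₀ := by
    intro x hx
    have hx2 : x ∈ (Submodule.span ℝ {y₀} : Submodule ℝ L) := by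
      rw [Set.ext_iff] at hfix
      simpa using (hfix x).mp hx
    rcases Submodule.mem_span_singleton.mp hx2 with ⟨a, ha⟩
    exact ⟨a, ha.symm⟩
  -- decomposition
  have hdec : ∀ x : L, ∃ a : ℝ, ∃ p ∈ P, x = a • y₀ + p := by
    intro x
    have hk : σ₁ ((1/2 : ℝ) • (x + σ₁ x)) = (1/2 : ℝ) • (x + σ₁ x) := by
      rw [map_smul, map_add, hσ₁]; ring_nf; module
    rcases hfix' _ hk with ⟨a, ha⟩
    refine ⟨a, (1/2 : ℝ) • (x - σ₁ x), ?_, ?_⟩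
    · rw [hPmem]
      rw [map_smul, map_sub, hσ₁]
      module
    · rw [← ha]; module
  -- P ∩ fixed = 0
  have hKP : ∀ v ∈ P, σ₁ v = v → v = 0 := by
    intro v hv hfv
    have h1 : σ₁ v = -v := (hPmem v).mp hv
    have hv2 : v = -v := by conv_lhs => rw [← hfv, h1]
    have h2 : v + v = 0 := by linear_combination (norm := module) hv2
    have : (2 : ℝ) • v = 0 := by rw [two_smul]; exact h2
    simpa [smul_eq_zero] using this
  -- ad y₀ preserves P
  have hA : ∀ p ∈ P, ⁅y₀, p⁆ ∈ P := by
    intro p hp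
    rw [hPmem] at hp ⊢
    rw [LieHom.map_lie, hσy₀, hp, lie_neg]
  -- brackets of P-elements are multiples of y₀
  have hPP : ∀ p ∈ P, ∀ q ∈ P, ∃ c : ℝ, ⁅p, q⁆ = c • y₀ := by
    intro p hp q hq
    rw [hPmem] at hp hq
    apply hfix'
    rw [LieHom.map_lie, hp, hq, neg_lie, lie_neg, neg_neg]
  -- [P,P] ≠ 0 : produce y z in P with ⁅y,z⁆ = y₀
  obtain ⟨y, hy, z, hz, hyz⟩ : ∃ y ∈ P, ∃ z ∈ P, ⁅y, z⁆ = y₀ := by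
    by_contra hcon
    push_neg at hcon
    -- then all brackets in P vanish, otherwise rescale
    have hzero : ∀ p ∈ P, ∀ q ∈ P, ⁅p, q⁆ = 0 := by
      intro p hp q hq
      rcases hPP p hp q hq with ⟨c, hc⟩
      by_contra hne
      have hc0 : c ≠ 0 := by rintro rfl; simp at hc; exact hne hc
      have : ⁅c⁻¹ • p, q⁆ = y₀ := by
        rw [smul_lie, hc, smul_smul, inv_mul_cancel₀ hc0, one_smul]
      exact hcon (c⁻¹ • p) (P.smul_mem _ hp) q hq this
    -- P is a Lie ideal
    let I : LieIdeal ℝ L :=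
      { P with
        lie_mem := by
          intro x m hm
          rcases hdec x with ⟨a, p, hp, rfl⟩
          have : ⁅a • y₀ + p, m⁆ = a • ⁅y₀, m⁆ + ⁅p, m⁆ := by
            rw [add_lie, smul_lie]
          show ⁅a • y₀ + p, m⁆ ∈ P
          rw [this, hzero p hp m hm, add_zero]
          exact P.smul_mem _ (hA m hm) }
    have hIP : ∀ x : L, x ∈ I ↔ x ∈ P := fun x => Iff.rfl
    rcases LieAlgebra.IsSimple.eq_bot_or_eq_top I with hbot | htop
    · -- P = 0, so L = ℝ y₀, abelian
      have habs : IsLieAbelian L := by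
        constructor
        intro u v
        rcases hdec u with ⟨a, p, hp, rfl⟩
        rcases hdec v with ⟨b, q, hq, rfl⟩
        have hp0 : p = 0 := by
          have := (hIP p).mpr hp
          rw [hbot] at this
          simpa using this
        have hq0 : q = 0 := by
          have := (hIP q).mpr hq
          rw [hbot] at this
          simpa using this
        subst hp0; subst hq0
        simp [smul_lie, lie_smul]
      exact LieAlgebra.IsSimple.non_abelian (R := ℝ) habs
    · -- y₀ ∈ P : contradiction
      have : y₀ ∈ P := by
        rw [← hIP, htop]; trivial
      have := hKP y₀ this hσy₀
      exact hy₀ this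
  have hz0 : z ≠ 0 := by
    rintro rfl
    rw [lie_zero] at hyz
    exact hy₀ hyz.symm
  -- derived algebra is everything
  have hder : (⁅(⊤ : LieIdeal ℝ L), (⊤ : LieIdeal ℝ L)⁆ : LieIdeal ℝ L) = ⊤ := by
    rcases LieAlgebra.IsSimple.eq_bot_or_eq_top (⁅(⊤ : LieIdeal ℝ L), (⊤ : LieIdeal ℝ L)⁆) with h | h
    · exfalso
      apply LieAlgebra.IsSimple.non_abelian (R := ℝ) (L := L)
      constructor
      intro u v
      have : (⁅u, v⁆ : L) ∈ (⁅(⊤ : LieIdeal ℝ L), (⊤ : LieIdeal ℝ L)⁆ : LieIdeal ℝ L) :=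
        LieSubmodule.lie_mem_lie (LieSubmodule.mem_top u) (LieSubmodule.mem_top v)
      rw [h] at this
      simpa using this
    · exact h
  -- the submodule A(P) ⊔ ℝ y₀ is everything
  have hS : (Submodule.map ((LieAlgebra.ad ℝ L) y₀) P ⊔ Submodule.span ℝ {y₀} : Submodule ℝ L) = ⊤ := by
    set S := (Submodule.map ((LieAlgebra.ad ℝ L) y₀) P ⊔ Submodule.span ℝ {y₀} : Submodule ℝ L) with hSdef
    have hbr : ∀ u v : L, ⁅u, v⁆ ∈ S := by
      intro u v
      rcases hdec u with ⟨a, p, hp, rfl⟩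
      rcases hdec v with ⟨b, q, hq, rfl⟩
      have hexp : ⁅a • y₀ + p, b • y₀ + q⁆
          = a • ⁅y₀, q⁆ - b • ⁅y₀, p⁆ + ⁅p, q⁆ := by
        have hpy : ⁅p, y₀⁆ = -⁅y₀, p⁆ := by rw [← lie_skew]
        rw [add_lie, lie_add, lie_add, smul_lie, smul_lie, lie_smul, lie_smul, lie_self, hpy]
        module
      rw [hexp]
      rcases hPP p hp q hq with ⟨c, hc⟩
      have h1 : a • ⁅y₀, q⁆ ∈ S :=
        S.smul_mem _ (le_sup_left (α := Submodule ℝ L) (Submodule.mem_map_of_mem hq))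
      have h2 : b • ⁅y₀, p⁆ ∈ S :=
        S.smul_mem _ (le_sup_left (α := Submodule ℝ L) (Submodule.mem_map_of_mem hp))
      have h3 : ⁅p, q⁆ ∈ S := by
        rw [hc]
        exact S.smul_mem _ (le_sup_right (α := Submodule ℝ L)
          (Submodule.mem_span_singleton_self y₀))
      exact S.add_mem (S.sub_mem h1 h2) h3
    rw [eq_top_iff]
    intro x _
    have hx : x ∈ (⁅(⊤ : LieIdeal ℝ L), (⊤ : LieIdeal ℝ L)⁆ : LieIdeal ℝ L) := by
      rw [hder]; exact LieSubmodule.mem_top _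
    have hx2 : x ∈ Submodule.span ℝ
        { m : L | ∃ u ∈ (⊤ : LieIdeal ℝ L), ∃ v ∈ (⊤ : LieIdeal ℝ L), ⁅u, v⁆ = m } := by
      rw [← LieSubmodule.lieIdeal_oper_eq_linear_span']
      exact (LieSubmodule.mem_toSubmodule _).mpr hx
    refine Submodule.span_le.mpr ?_ hx2
    rintro w ⟨u, -, v, -, rfl⟩
    exact hbr u v
  -- surjectivity of ad y₀ on P
  have hsurj : ∀ x ∈ P, ∃ q ∈ P, ⁅y₀, q⁆ = x := by
    intro x hx
    have : x ∈ (Submodule.map ((LieAlgebra.ad ℝ L) y₀) P ⊔ Submodule.span ℝ {y₀} : Submodule ℝ L) := by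
      rw [hS]; trivial
    rcases Submodule.mem_sup.mp this with ⟨m, hm, t, ht, hmt⟩
    rcases hm with ⟨q, hq, rfl⟩
    rcases Submodule.mem_span_singleton.mp ht with ⟨a, rfl⟩
    refine ⟨q, hq, ?_⟩
    have hmem : x - (LieAlgebra.ad ℝ L) y₀ q ∈ P :=
      P.sub_mem hx (hA q hq)
    have hfixv : σ₁ (x - (LieAlgebra.ad ℝ L) y₀ q) = x - (LieAlgebra.ad ℝ L) y₀ q := by
      have : x - (LieAlgebra.ad ℝ L) y₀ q = a • y₀ := by
        rw [← hmt]; abel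
      rw [this, map_smul, hσy₀]
    have := hKP _ hmem hfixv
    have hxq : x = (LieAlgebra.ad ℝ L) y₀ q := by
      have := sub_eq_zero.mp this
      exact this
    rw [hxq]; rfl
  -- P is contained in span of the two vectors ⁅y₀,y⁆, ⁅y₀,z⁆
  have hPspan : ∀ x ∈ P, x ∈ Submodule.span ℝ ({⁅y₀, y⁆, ⁅y₀, z⁆} : Set L) := by
    intro x hx
    rcases hsurj x hx with ⟨q, hq, rfl⟩
    rcases hPP z hz q hq with ⟨c, hc⟩
    rcases hPP q hq y hy with ⟨d, hd⟩
    have hjac : ⁅q, ⁅y, z⁆⁆ + ⁅y, ⁅z, q⁆⁆ + ⁅z, ⁅q, y⁆⁆ = 0 := lie_jacobi q y z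
    rw [hyz, hc, hd, lie_smul, lie_smul] at hjac
    have hql : ⁅q, y₀⁆ = -⁅y₀, q⁆ := by rw [← lie_skew]
    rw [hql] at hjac
    have hexpr : ⁅y₀, q⁆ = c • ⁅y, y₀⁆ + d • ⁅z, y₀⁆ := by
      linear_combination (norm := module) -hjac
    have hyy : ⁅y, y₀⁆ = -⁅y₀, y⁆ := by rw [← lie_skew]
    have hzz : ⁅z, y₀⁆ = -⁅y₀, z⁆ := by rw [← lie_skew]
    rw [hyy, hzz] at hexpr
    rw [hexpr]
    have h1 : ⁅y₀, y⁆ ∈ Submodule.span ℝ ({⁅y₀, y⁆, ⁅y₀, z⁆} : Set L) :=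
      Submodule.subset_span (by left; rfl)
    have h2 : ⁅y₀, z⁆ ∈ Submodule.span ℝ ({⁅y₀, y⁆, ⁅y₀, z⁆} : Set L) :=
      Submodule.subset_span (by right; rfl)
    exact Submodule.add_mem _ (Submodule.smul_mem _ _ (Submodule.neg_mem _ h1))
      (Submodule.smul_mem _ _ (Submodule.neg_mem _ h2))
  -- spanning: L = span {y₀, ⁅y₀,y⁆, ⁅y₀,z⁆}
  have htopspan : Submodule.span ℝ ({y₀, ⁅y₀, y⁆, ⁅y₀, z⁆} : Set L) = ⊤ := by
    rw [eq_top_iff]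
    intro x _
    rcases hdec x with ⟨a, p, hp, rfl⟩
    have h0 : y₀ ∈ Submodule.span ℝ ({y₀, ⁅y₀, y⁆, ⁅y₀, z⁆} : Set L) :=
      Submodule.subset_span (by left; rfl)
    have hsub : ({⁅y₀, y⁆, ⁅y₀, z⁆} : Set L) ⊆ ({y₀, ⁅y₀, y⁆, ⁅y₀, z⁆} : Set L) := by
      intro w hw
      rcases hw with h | h
      · right; left; exact h
      · right; right; exact h
    have hps : p ∈ Submodule.span ℝ ({y₀, ⁅y₀, y⁆, ⁅y₀, z⁆} : Set L) :=
      Submodule.span_mono hsub (hPspan p hp)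
    exact Submodule.add_mem _ (Submodule.smul_mem _ _ h0) hps
  -- upper bound
  have hle : Module.finrank ℝ L ≤ 3 := by
    have hr : Submodule.span ℝ (Set.range ![y₀, ⁅y₀, y⁆, ⁅y₀, z⁆]) = ⊤ := by
      have : Set.range ![y₀, ⁅y₀, y⁆, ⁅y₀, z⁆] = ({y₀, ⁅y₀, y⁆, ⁅y₀, z⁆} : Set L) := by
        simp [Matrix.range_cons, Matrix.range_empty, Set.insert_union]
        ext w; simp [Fin.exists_fin_succ]
        tauto
      rw [this, htopspan]
    have := finrank_range_le_card (R := ℝ) ![y₀, ⁅y₀, y⁆, ⁅y₀, z⁆]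
    rw [Set.finrank, hr, finrank_top] at this
    simpa using this
  -- lower bound : y₀, y, z linearly independent
  have hli : LinearIndependent ℝ ![y₀, y, z] := by
    rw [Fintype.linearIndependent_iff]
    intro g hg
    rw [Fin.sum_univ_three] at hg
    simp only [Matrix.cons_val_zero, Matrix.cons_val_one, Matrix.head_cons,
      Matrix.cons_val_two, Matrix.tail_cons] at hg
    have hσg : g 0 • y₀ - g 1 • y - g 2 • z = 0 := by
      have h := congrArg σ₁ hg
      rw [map_add, map_add, map_smul, map_smul, map_smul, hσy₀,
        (hPmem y).mp hy, (hPmem z).mp hz, map_zero] at h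
      linear_combination (norm := module) h
    have h0 : g 0 = 0 := by
      have h2 : (g 0 * 2) • y₀ = 0 := by
        rw [mul_smul]
        linear_combination (norm := module) hg + hσg
      rcases smul_eq_zero.mp h2 with h | h
      · linarith [mul_eq_zero.mp h |>.elim id (by intro h2'; exact absurd h2' two_ne_zero)]
      · exact absurd h hy₀
    have h12 : g 1 • y + g 2 • z = 0 := by
      rw [h0, zero_smul, zero_add] at hg; exact hg
    have h1 : g 1 = 0 := by
      have hb : ⁅g 1 • y + g 2 • z, z⁆ = 0 := by rw [h12, zero_lie]
      rw [add_lie, smul_lie, smul_lie, lie_self, smul_zero, add_zero, hyz] at hb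
      rcases smul_eq_zero.mp hb with h | h
      · exact h
      · exact absurd h hy₀
    have h2 : g 2 = 0 := by
      rw [h1, zero_smul, zero_add] at h12
      rcases smul_eq_zero.mp h12 with h | h
      · exact h
      · exact absurd h hz0
    intro i
    fin_cases i
    · exact h0
    · exact h1
    · exact h2
  have hge : 3 ≤ Module.finrank ℝ L := by
    have := hli.fintype_card_le_finrank
    simpa using this
  omega
end

section
/- Let g₁ be a simple real Lie algebra, g = g₁ ⊕ g₁ with flip τ(x,y) = (y,x), and suppose σ(x,y) = (σ₁(x), σ₁(y)) for an involutive automorphism σ₁ of g₁ with dim(g^{−τ} ∩ g^{−σ}) = 1. Then g₁^{−σ₁} is one-dimensional, which forces ℝ·y₀ = g₁^{−σ₁} to be an ideal of g₁, contradicting simplicity. Hence no such dissecting triple exists with σ of diagonal form. -/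
/-- Let `g₁` be a simple real Lie algebra, `g = g₁ ⊕ g₁` with the flip
`τ(x,y) = (y,x)`, and `σ(x,y) = (σ₁ x, σ₁ y)` for an involutive automorphism `σ₁`
of `g₁`. Then `g^{-τ} ∩ g^{-σ} = {(x,-x) : σ₁ x = -x}` is never one-dimensional:
otherwise `g₁^{-σ₁} = ℝ·y₀` would be an ideal of `g₁`, contradicting simplicity.
Hence there is no dissecting triple with `σ` of diagonal form. -/
theorem stmt_17 {L : Type*} [LieRing L] [LieAlgebra ℝ L] [LieAlgebra.IsSimple ℝ L]
    [FiniteDimensional ℝ L]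
    (σ₁ : L →ₗ⁅ℝ⁆ L) (hσ₁ : ∀ z : L, σ₁ (σ₁ z) = z) :
    -- the subspace `g^{-τ} ∩ g^{-σ} = {(x, y) : y = -x, σ₁ x = -x}` of `g = g₁ × g₁`
    Module.finrank ℝ
      ↥(LinearMap.ker (LinearMap.snd ℝ L L + LinearMap.fst ℝ L L) ⊓
        LinearMap.ker (((σ₁ : L →ₗ[ℝ] L) + LinearMap.id).comp (LinearMap.fst ℝ L L)))
      ≠ 1 := by
  intro h
  set K : Submodule ℝ L := LinearMap.ker ((σ₁ : L →ₗ[ℝ] L) + LinearMap.id) with hK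
  have hKmem : ∀ x : L, x ∈ K ↔ σ₁ x + x = 0 := by
    intro x
    simp [hK, LinearMap.mem_ker]
  -- the given subspace is equivalent to K
  have e : (LinearMap.ker (LinearMap.snd ℝ L L + LinearMap.fst ℝ L L) ⊓
        LinearMap.ker (((σ₁ : L →ₗ[ℝ] L) + LinearMap.id).comp (LinearMap.fst ℝ L L))
        : Submodule ℝ (L × L)) ≃ₗ[ℝ] K := by
    refine
      { toFun := fun p => ⟨p.1.1, ?_⟩
        map_add' := fun p q => rfl
        map_smul' := fun c p => rfl
        invFun := fun x => ⟨(x.1, -x.1), ?_, ?_⟩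
        left_inv := ?_
        right_inv := ?_ }
    · have := p.2.2
      simpa [hKmem, LinearMap.mem_ker] using this
    · simp [LinearMap.mem_ker]
    · simpa [LinearMap.mem_ker] using x.2
    · rintro ⟨⟨a, b⟩, h1, h2⟩
      have hb : b + a = 0 := by simpa [LinearMap.mem_ker] using h1
      have hba : b = -a := eq_neg_of_add_eq_zero_left hb
      ext <;> simp [hba]
    · intro x
      rfl
  have hK1 : Module.finrank ℝ K = 1 := by
    rw [← LinearEquiv.finrank_eq e]; exact h
  -- K is one-dimensional, hence any two elements of K have zero bracket
  obtain ⟨v, -, hv⟩ := finrank_eq_one_iff'.mp hK1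
  have hbr : ∀ a b : L, a ∈ K → b ∈ K → ⁅a, b⁆ = 0 := by
    intro a b ha hb
    obtain ⟨c, hc⟩ := hv ⟨a, ha⟩
    obtain ⟨d, hd⟩ := hv ⟨b, hb⟩
    have hc' : a = c • (v : L) := by
      have := congrArg (Subtype.val) hc; simpa using this.symm
    have hd' : b = d • (v : L) := by
      have := congrArg (Subtype.val) hd; simpa using this.symm
    rw [hc', hd']
    simp
  -- K is a Lie ideal
  have hideal : ∀ (x y : L), y ∈ K → ⁅x, y⁆ ∈ K := by
    intro x y hy
    have hy' : σ₁ y = -y := eq_neg_of_add_eq_zero_left ((hKmem y).mp hy)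
    have hx' : (x - σ₁ x) ∈ K := by
      rw [hKmem, map_sub, hσ₁]
      abel
    have hzero : ⁅x - σ₁ x, y⁆ = 0 := hbr _ _ hx' hy
    rw [hKmem]
    have hml : σ₁ ⁅x, y⁆ = ⁅σ₁ x, σ₁ y⁆ := σ₁.map_lie x y
    have h0 : ⁅x, y⁆ = ⁅σ₁ x, y⁆ := by
      have : ⁅x, y⁆ - ⁅σ₁ x, y⁆ = 0 := by rw [← sub_lie]; exact hzero
      exact sub_eq_zero.mp this
    rw [hml, hy', lie_neg, h0]
    abel
  let I : LieIdeal ℝ L :=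
    { K with lie_mem := fun {x y} hy => hideal x y hy }
  have hIcar : ∀ z : L, z ∈ I ↔ z ∈ K := fun z => Iff.rfl
  rcases LieAlgebra.IsSimple.eq_bot_or_eq_top (I := I) with hbot | htop
  · -- I = ⊥ : then finrank K = 0 ≠ 1
    have hKbot : K = ⊥ := by
      ext z
      rw [← hIcar z, hbot]
      simp [LieSubmodule.mem_bot]
    rw [hKbot] at hK1
    simp at hK1
  · -- I = ⊤ : then σ₁ = -id, so L is abelian, contradiction
    have hmemK : ∀ z : L, z ∈ K := by
      intro z; rw [← hIcar z, htop]; trivial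
    have habel : IsLieAbelian L := by
      constructor
      intro x y
      have hx : σ₁ x = -x := eq_neg_of_add_eq_zero_left ((hKmem x).mp (hmemK x))
      have hy : σ₁ y = -y := eq_neg_of_add_eq_zero_left ((hKmem y).mp (hmemK y))
      have h1 : σ₁ ⁅x, y⁆ = ⁅x, y⁆ := by
        rw [σ₁.map_lie, hx, hy]; simp
      have h2 : σ₁ ⁅x, y⁆ = -⁅x, y⁆ :=
        eq_neg_of_add_eq_zero_left ((hKmem _).mp (hmemK _))
      have h3 : ⁅x, y⁆ = -⁅x, y⁆ := h1.symm.trans h2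
      have h4 : (2 : ℝ) • ⁅x, y⁆ = 0 := by
        rw [two_smul]
        nth_rewrite 2 [h3]
        abel
      have h2ne : (2 : ℝ) ≠ 0 := by norm_num
      exact (smul_eq_zero.mp h4).resolve_left h2ne
    exact LieAlgebra.IsSimple.non_abelian (R := ℝ) (L := L) habel
end
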